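/- Let p be a real polynomial and let c ≥ 0, d, β ≥ 0 be real numbers. Then the number of non-real zeros (with multiplicity) of (cx+d)·p(x) − β·p'(x) is at most the number of non-real zeros of p. -/

import Mathlib

open Polynomial Finset

open scoped Classical in
/-- Number of non-real complex zeros of a real polynomial, counted with multiplicity. -/
noncomputable def ZC (p : Polynomial ℝ) : ℕ :=
  (((p.map (algebraMap ℝ ℂ)).roots).filter (fun z => z.im ≠ 0)).card

/-- Number of real zeros of a real polynomial, counted with multiplicity. -/
noncomputable def ZR (p : Polynomial ℝ) : ℕ := p.roots.card

section Auxiliary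

open Filter

/-- A multiset invariant under a fixed-point-free involution has even cardinality. -/
lemma stmt19_even_card_of_invol {α : Type*} [DecidableEq α] (f : α → α)
    (hf : ∀ a, f (f a) = a) (s : Multiset α)
    (hmap : s.map f = s) (hne : ∀ a ∈ s, f a ≠ a) : Even (Multiset.card s) := by
  induction s using Multiset.strongInductionOn with
  | ih s ih =>
  rcases Multiset.empty_or_exists_mem s with rfl | ⟨a, ha⟩
  · simp
  have hfa : f a ∈ s := by
    have : f a ∈ s.map f := Multiset.mem_map_of_mem f ha
    rwa [hmap] at this
  have hfane : f a ≠ a := hne a ha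
  have hfa' : f a ∈ s.erase a := (Multiset.mem_erase_of_ne hfane).2 hfa
  set t := (s.erase a).erase (f a) with ht
  have hs : s = a ::ₘ f a ::ₘ t := by
    rw [ht, Multiset.cons_erase hfa', Multiset.cons_erase ha]
  have htlt : t < s := by
    rw [hs]
    calc t < f a ::ₘ t := Multiset.lt_cons_self _ _
    _ < a ::ₘ f a ::ₘ t := Multiset.lt_cons_self _ _
  have hmapt : t.map f = t := by
    have h2 : (a ::ₘ f a ::ₘ t).map f = a ::ₘ f a ::ₘ t := by rw [← hs]; exact hmap
    rw [Multiset.map_cons, Multiset.map_cons, hf a, Multiset.cons_swap] at h2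
    exact (Multiset.cons_inj_right _).1 ((Multiset.cons_inj_right _).1 h2)
  have := ih t htlt hmapt
    (fun b hb => hne b (by rw [hs]; exact Multiset.mem_cons_of_mem (Multiset.mem_cons_of_mem hb)))
  rw [hs]
  simpa [Nat.even_add_one, Nat.even_add] using this

lemma stmt19_map_conj_eq (p : Polynomial ℝ) :
    (p.map (algebraMap ℝ ℂ)).map (starRingEnd ℂ) = p.map (algebraMap ℝ ℂ) := by
  rw [Polynomial.map_map]
  congr 1
  ext x
  simp

lemma stmt19_roots_conj_invariant (p : Polynomial ℝ) :
    (p.map (algebraMap ℝ ℂ)).roots.map (starRingEnd ℂ) = (p.map (algebraMap ℝ ℂ)).roots := by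
  conv_rhs => rw [← stmt19_map_conj_eq p]
  exact ((IsAlgClosed.splits _).roots_map_of_injective (starRingEnd ℂ).injective).symm

open scoped Classical in
lemma stmt19_ZC_even (p : Polynomial ℝ) : Even (ZC p) := by
  rw [ZC]
  apply stmt19_even_card_of_invol (fun z => (starRingEnd ℂ) z) (fun z => Complex.conj_conj z)
  · conv_rhs => rw [← stmt19_roots_conj_invariant p]
    rw [Multiset.filter_map]
    congr 1
    ext z
    simp
  · intro z hz
    have := (Multiset.mem_filter.1 hz).2
    simp only [ne_eq]
    intro h
    exact this (Complex.conj_eq_iff_im.1 h)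

open scoped Classical in
lemma stmt19_real_part (p : Polynomial ℝ) :
    ((p.map (algebraMap ℝ ℂ)).roots.filter (fun z => ¬ z.im ≠ 0)) =
      p.roots.map (fun x : ℝ => (x : ℂ)) := by
  refine Multiset.ext.2 fun z => ?_
  rw [Multiset.count_filter]
  by_cases hz : z.im = 0
  · have hz' : z = ((z.re : ℝ) : ℂ) := by apply Complex.ext <;> simp [hz]
    rw [if_pos (by simpa using hz)]
    have h1 : Multiset.count z (Multiset.map (fun x : ℝ => (x : ℂ)) p.roots)
        = Multiset.count z.re p.roots := by
      conv_lhs => rw [hz']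
      exact Multiset.count_map_eq_count' _ _ Complex.ofReal_injective _
    rw [h1, Polynomial.count_roots, Polynomial.count_roots]
    conv_lhs => rw [hz']
    rw [show ((z.re : ℝ) : ℂ) = algebraMap ℝ ℂ z.re from rfl,
      ← Polynomial.eq_rootMultiplicity_map (algebraMap ℝ ℂ).injective]
  · rw [if_neg (by simpa using hz)]
    symm
    rw [Multiset.count_eq_zero]
    intro hmem
    obtain ⟨x, _, rfl⟩ := Multiset.mem_map.1 hmem
    exact hz (by simp)

open scoped Classical in
lemma stmt19_ZC_add_ZR (p : Polynomial ℝ) (hp : p ≠ 0) : ZC p + ZR p = p.natDegree := by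
  have hcard : Multiset.card (p.map (algebraMap ℝ ℂ)).roots = p.natDegree := by
    rw [← Polynomial.natDegree_map_eq_of_injective (algebraMap ℝ ℂ).injective p]
    exact (Polynomial.splits_iff_card_roots.1 (IsAlgClosed.splits _))
  have hsplit := Multiset.filter_add_not (fun z => z.im ≠ 0) (p.map (algebraMap ℝ ℂ)).roots
  have hzr : Multiset.card
      ((p.map (algebraMap ℝ ℂ)).roots.filter (fun z => ¬ z.im ≠ 0)) = ZR p := by
    rw [stmt19_real_part, Multiset.card_map, ZR]
  rw [ZC, ← hzr, ← Multiset.card_add, hsplit, hcard]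

lemma stmt19_ZC_mul (p q : Polynomial ℝ) (hp : p ≠ 0) (hq : q ≠ 0) :
    ZC (p * q) = ZC p + ZC q := by
  classical
  rw [ZC, ZC, ZC, Polynomial.map_mul, Polynomial.roots_mul, Multiset.filter_add,
    Multiset.card_add]
  exact mul_ne_zero ((Polynomial.map_ne_zero_iff (algebraMap ℝ ℂ).injective).2 hp)
    ((Polynomial.map_ne_zero_iff (algebraMap ℝ ℂ).injective).2 hq)

lemma stmt19_ZC_C_mul (p : Polynomial ℝ) (b : ℝ) (hb : b ≠ 0) : ZC (C b * p) = ZC p := by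
  rw [ZC, ZC, Polynomial.map_mul, Polynomial.map_C]
  rw [Polynomial.roots_C_mul]
  simpa using hb

lemma stmt19_ZC_zero : ZC 0 = 0 := by simp [ZC]

lemma stmt19_ZC_linear (a b : ℝ) : ZC (C a * X + C b) = 0 := by
  classical
  rw [ZC, Multiset.card_eq_zero, Multiset.filter_eq_nil]
  intro z hz
  by_cases ha : a = 0
  · subst ha
    simp only [map_zero, zero_mul, zero_add, Polynomial.map_C] at hz
    rw [Polynomial.roots_C] at hz
    simp at hz
  · have hz' := Polynomial.isRoot_of_mem_roots hz
    simp only [Polynomial.IsRoot, Polynomial.map_add, Polynomial.map_mul, Polynomial.map_C,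
      Polynomial.map_X, Polynomial.eval_add, Polynomial.eval_mul, Polynomial.eval_C,
      Polynomial.eval_X] at hz'
    have him : a * z.im = 0 := by
      have := congrArg Complex.im hz'
      simpa using this
    simp only [ne_eq, Decidable.not_not]
    rcases mul_eq_zero.1 him with h | h
    · exact absurd h ha
    · exact h

lemma stmt19_card_le_aux (p q : Polynomial ℝ) (hq : q ≠ 0)
    (hmult : ∀ x, p.rootMultiplicity x ≤ q.rootMultiplicity x + 1)
    (hbetween : ∀ a b : ℝ, p.IsRoot a → p.IsRoot b → a < b →
      ∃ z, q.IsRoot z ∧ a < z ∧ z < b) :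
    Multiset.card p.roots ≤ Multiset.card q.roots + 1 := by
  classical
  rcases eq_or_ne p 0 with rfl | hp
  · simp
  have step1 : p.roots.toFinset.card ≤ (q.roots.toFinset \ p.roots.toFinset).card + 1 := by
    refine Finset.card_le_diff_of_interleaved fun x hx y hy hxy hxy' => ?_
    rw [Multiset.mem_toFinset, mem_roots hp] at hx hy
    obtain ⟨z, hz1, hz2, hz3⟩ := hbetween x y hx hy hxy
    exact ⟨z, by rw [Multiset.mem_toFinset, mem_roots hq]; exact hz1, hz2, hz3⟩
  calc
    Multiset.card p.roots = ∑ x ∈ p.roots.toFinset, p.roots.count x :=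
      (Multiset.toFinset_sum_count_eq _).symm
    _ = ∑ x ∈ p.roots.toFinset, (p.roots.count x - 1 + 1) :=
      (Eq.symm <| Finset.sum_congr rfl fun _ hx => tsub_add_cancel_of_le <|
        Nat.succ_le_iff.2 <| Multiset.count_pos.2 <| Multiset.mem_toFinset.1 hx)
    _ = (∑ x ∈ p.roots.toFinset, (p.rootMultiplicity x - 1)) + p.roots.toFinset.card := by
      simp only [Finset.sum_add_distrib, Finset.card_eq_sum_ones, count_roots]
    _ ≤ (∑ x ∈ p.roots.toFinset, q.rootMultiplicity x) +
          ((q.roots.toFinset \ p.roots.toFinset).card + 1) :=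
      (add_le_add (Finset.sum_le_sum fun x _ => by have := hmult x; omega) step1)
    _ ≤ (∑ x ∈ p.roots.toFinset, q.roots.count x) +
          ((∑ x ∈ q.roots.toFinset \ p.roots.toFinset, q.roots.count x) + 1) := by
      simp only [← count_roots]
      refine add_le_add_right (add_le_add_left ((Finset.card_eq_sum_ones _).trans_le ?_) _) _
      refine Finset.sum_le_sum fun x hx => Nat.succ_le_iff.2 <| ?_
      rw [Multiset.count_pos, ← Multiset.mem_toFinset]
      exact (Finset.mem_sdiff.1 hx).1
    _ = Multiset.card q.roots + 1 := by
      rw [← add_assoc, ← Finset.sum_union Finset.disjoint_sdiff, Finset.union_sdiff_self_eq_union,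
        ← Multiset.toFinset_sum_count_eq, ← Finset.sum_subset Finset.subset_union_right]
      intro x _ hx₂
      simpa only [Multiset.mem_toFinset, Multiset.count_eq_zero] using hx₂

lemma stmt19_card_le_aux' (p q : Polynomial ℝ) (hq : q ≠ 0)
    (hmult : ∀ x, p.rootMultiplicity x ≤ q.rootMultiplicity x + 1)
    (hbetween : ∀ a b : ℝ, p.IsRoot a → p.IsRoot b → a < b →
      ∃ z, q.IsRoot z ∧ a < z ∧ z < b)
    (htail : ∃ ξ, q.IsRoot ξ ∧ ∀ a, p.IsRoot a → a < ξ) :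
    Multiset.card p.roots ≤ Multiset.card q.roots := by
  classical
  rcases eq_or_ne p 0 with rfl | hp
  · simp
  obtain ⟨ξ, hξroot, hξgt⟩ := htail
  set q₁ := q /ₘ (X - C ξ) with hq₁def
  have hfact : (X - C ξ) * q₁ = q := (mul_divByMonic_eq_iff_isRoot).2 hξroot
  have hq₁ : q₁ ≠ 0 := by
    intro h
    rw [h, mul_zero] at hfact
    exact hq hfact.symm
  have hroots : q.roots = ξ ::ₘ q₁.roots := by
    rw [← hfact, Polynomial.roots_mul (by rw [hfact]; exact hq), Polynomial.roots_X_sub_C]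
    simp
  have hmain : Multiset.card p.roots ≤ Multiset.card q₁.roots + 1 := by
    apply stmt19_card_le_aux p q₁ hq₁
    · intro x
      rcases eq_or_ne x ξ with rfl | hxξ
      · have : p.rootMultiplicity x = 0 :=
          rootMultiplicity_eq_zero_iff.2 (fun hroot => absurd (hξgt x hroot) (lt_irrefl x))
        omega
      · have hmul : q.rootMultiplicity x
            = (X - C ξ).rootMultiplicity x + q₁.rootMultiplicity x := by
          rw [← hfact, Polynomial.rootMultiplicity_mul (by rw [hfact]; exact hq)]
        have hzero : (X - C ξ).rootMultiplicity x = 0 :=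
          rootMultiplicity_eq_zero_iff.2 (fun hroot =>
            absurd (by have := sub_eq_zero.1 (by simpa using hroot); exact this : x = ξ) hxξ)
        have := hmult x
        omega
    · intro a b ha hb hab
      obtain ⟨z, hz1, hz2, hz3⟩ := hbetween a b ha hb hab
      refine ⟨z, ?_, hz2, hz3⟩
      have hzξ : z ≠ ξ := ne_of_lt (lt_trans hz3 (hξgt b hb))
      have : (X - C ξ).eval z * q₁.eval z = 0 := by
        rw [← Polynomial.eval_mul, hfact]; exact hz1
      rcases mul_eq_zero.1 this with h | h
      · exact absurd (by simpa using h) (sub_ne_zero.2 hzξ)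
      · exact h
  rw [hroots, Multiset.card_cons]
  omega

lemma stmt19_mult_le (p : Polynomial ℝ) (u v : ℝ)
    (hq : (C u * X + C v) * p - derivative p ≠ 0) (a : ℝ) :
    p.rootMultiplicity a ≤ ((C u * X + C v) * p - derivative p).rootMultiplicity a + 1 := by
  rcases eq_or_ne p 0 with rfl | hp
  · simp
  set m := p.rootMultiplicity a with hm
  have h1 : (X - C a) ^ (m - 1) ∣ p :=
    dvd_trans (pow_dvd_pow _ (Nat.sub_le m 1)) (Polynomial.pow_rootMultiplicity_dvd p a)
  have h2 : (X - C a) ^ (m - 1) ∣ derivative p := by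
    rcases eq_or_ne (derivative p) 0 with hd | hd
    · rw [hd]; exact dvd_zero _
    · rw [← Polynomial.le_rootMultiplicity_iff hd]
      have := Polynomial.rootMultiplicity_sub_one_le_derivative_rootMultiplicity p a
      omega
  have h3 : (X - C a) ^ (m - 1) ∣ (C u * X + C v) * p - derivative p :=
    dvd_sub (h1.mul_left _) h2
  have := (Polynomial.le_rootMultiplicity_iff hq).2 h3
  omega

lemma stmt19_g_hasDerivAt (p : Polynomial ℝ) (u v x : ℝ) :
    HasDerivAt (fun x => Real.exp (-(u/2) * x^2 - v*x) * p.eval x)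
      (-(Real.exp (-(u/2)*x^2 - v*x) * ((C u * X + C v) * p - derivative p).eval x)) x := by
  have hE : HasDerivAt (fun x : ℝ => -(u/2) * x^2 - v*x) (-(u/2) * (2*x) - v) x := by
    have h1 : HasDerivAt (fun x : ℝ => x^2) (2*x) x := by
      simpa using hasDerivAt_pow 2 x
    have h2 : HasDerivAt (fun x : ℝ => v*x) v x := by simpa using (hasDerivAt_id x).const_mul v
    exact (h1.const_mul (-(u/2))).sub h2
  have hmul := hE.exp.mul (p.hasDerivAt x)
  refine hmul.congr_deriv ?_
  simp only [Polynomial.eval_sub, Polynomial.eval_mul, Polynomial.eval_add, Polynomial.eval_C,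
    Polynomial.eval_X]
  ring

lemma stmt19_between_roots (p : Polynomial ℝ) (u v a b : ℝ) (ha : p.IsRoot a) (hb : p.IsRoot b)
    (hab : a < b) : ∃ z, ((C u * X + C v) * p - derivative p).IsRoot z ∧ a < z ∧ z < b := by
  have hcont : ContinuousOn (fun x => Real.exp (-(u/2) * x^2 - v*x) * p.eval x)
      (Set.Icc a b) := by
    apply Continuous.continuousOn
    exact (Real.continuous_exp.comp (by continuity)).mul p.continuous_aeval
  have hI : Real.exp (-(u/2) * a^2 - v*a) * p.eval a
      = Real.exp (-(u/2) * b^2 - v*b) * p.eval b := by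
    rw [ha.eq_zero, hb.eq_zero, mul_zero, mul_zero]
  obtain ⟨z, hz1, hz2⟩ := exists_hasDerivAt_eq_zero hab hcont hI
    (fun x _ => stmt19_g_hasDerivAt p u v x)
  refine ⟨z, ?_, hz1.1, hz1.2⟩
  have : Real.exp (-(u/2)*z^2 - v*z) * ((C u * X + C v) * p - derivative p).eval z = 0 :=
    neg_eq_zero.1 hz2
  rcases mul_eq_zero.1 this with h | h
  · exact absurd h (Real.exp_ne_zero _)
  · exact h

lemma stmt19_tendsto_g (p : Polynomial ℝ) (u v : ℝ) (hu : 0 < u) :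
    Tendsto (fun x => Real.exp (-(u/2) * x^2 - v*x) * p.eval x) atTop (nhds 0) := by
  have hlim : Tendsto (fun x => |p.eval x / Real.exp x|) atTop (nhds 0) := by
    have := (p.tendsto_div_exp_atTop).abs
    simpa using this
  apply squeeze_zero_norm' _ hlim
  filter_upwards [eventually_ge_atTop (0:ℝ), eventually_ge_atTop ((1-v) * (2/u))] with x hx0 hx1
  have h2 : (1:ℝ) - v ≤ (u/2) * x := by
    have h3 := mul_le_mul_of_nonneg_left hx1 (le_of_lt (by positivity : (0:ℝ) < u/2))
    calc (1:ℝ) - v = (u/2) * ((1-v)*(2/u)) := by field_simp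
    _ ≤ (u/2) * x := h3
  have hEle : -(u/2) * x^2 - v*x ≤ -x := by
    nlinarith [mul_nonneg hx0 (by linarith : (0:ℝ) ≤ (u/2)*x + v - 1)]
  have h1 : Real.exp (-(u/2) * x^2 - v*x) ≤ Real.exp (-x) := Real.exp_le_exp.2 hEle
  rw [Real.norm_eq_abs, abs_mul, abs_div, Real.abs_exp, Real.abs_exp]
  calc Real.exp (-(u/2) * x^2 - v*x) * |p.eval x|
      ≤ Real.exp (-x) * |p.eval x| := mul_le_mul_of_nonneg_right h1 (abs_nonneg _)
    _ = |p.eval x| / Real.exp x := by rw [Real.exp_neg]; ring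

lemma stmt19_tail_aux (f f' : ℝ → ℝ) (hd : ∀ x, HasDerivAt f (f' x) x) (a x0 : ℝ)
    (hax : a < x0) (hfa : f a = 0) (hfx0 : 0 < f x0) (hlim : Tendsto f atTop (nhds 0)) :
    ∃ ξ, a < ξ ∧ f' ξ = 0 := by
  have hcont : Continuous f := by
    rw [continuous_iff_continuousAt]; exact fun x => (hd x).differentiableAt.continuousAt
  obtain ⟨M, hM⟩ := Filter.eventually_atTop.1 (hlim.eventually_lt_const hfx0)
  set b := max M x0 + 1 with hb
  have hbx0 : x0 < b := lt_of_le_of_lt (le_max_right M x0) (lt_add_one _)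
  have hab : a ≤ b := le_of_lt (lt_trans hax hbx0)
  have hfb : f b < f x0 := hM b (le_trans (le_max_left M x0) (le_of_lt (lt_add_one _)))
  obtain ⟨ξ, hξmem, hξmax⟩ := (isCompact_Icc (a := a) (b := b)).exists_isMaxOn
    (Set.nonempty_Icc.2 hab) hcont.continuousOn
  have hξmem' := Set.mem_Icc.1 hξmem
  have hfξ : f x0 ≤ f ξ := hξmax (Set.mem_Icc.2 ⟨le_of_lt hax, le_of_lt hbx0⟩)
  have hξa : a < ξ := by
    rcases lt_or_eq_of_le hξmem'.1 with h | h
    · exact h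
    · exfalso; rw [← h, hfa] at hfξ; linarith
  have hξb : ξ < b := by
    rcases lt_or_eq_of_le hξmem'.2 with h | h
    · exact h
    · exfalso; rw [h] at hfξ; linarith
  exact ⟨ξ, hξa, (hξmax.isLocalMax (Icc_mem_nhds hξa hξb)).hasDerivAt_eq_zero (hd ξ)⟩

lemma stmt19_tail_root (p : Polynomial ℝ) (u v : ℝ) (hu : 0 < u) (a : ℝ)
    (ha : p.IsRoot a) (hmax : ∀ b, p.IsRoot b → b ≤ a) :
    ∃ ξ, ((C u * X + C v) * p - derivative p).IsRoot ξ ∧ a < ξ := by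
  set q := (C u * X + C v) * p - derivative p with hq
  set g := fun x => Real.exp (-(u/2) * x^2 - v*x) * p.eval x with hgdef
  have hd : ∀ x, HasDerivAt g (-(Real.exp (-(u/2)*x^2 - v*x) * q.eval x)) x :=
    fun x => stmt19_g_hasDerivAt p u v x
  have hga : g a = 0 := by simp [hgdef, ha.eq_zero]
  have hx0 : p.eval (a+1) ≠ 0 := fun h => by have := hmax _ h; linarith
  have hgx0 : g (a+1) ≠ 0 := mul_ne_zero (Real.exp_ne_zero _) hx0
  have hlim := stmt19_tendsto_g p u v hu
  rcases hgx0.lt_or_gt with hneg | hpos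
  · obtain ⟨ξ, hξ1, hξ2⟩ := stmt19_tail_aux (fun x => -(g x))
      (fun x => Real.exp (-(u/2)*x^2 - v*x) * q.eval x)
      (fun x => by have := (hd x).neg; simp only [neg_neg] at this; exact this) a (a+1) (lt_add_one a)
      (by simp only [hga, neg_zero]) (by simpa using hneg)
      (by simpa only [neg_zero] using hlim.neg)
    refine ⟨ξ, ?_, hξ1⟩
    rcases mul_eq_zero.1 hξ2 with h | h
    · exact absurd h (Real.exp_ne_zero _)
    · exact h
  · obtain ⟨ξ, hξ1, hξ2⟩ := stmt19_tail_aux g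
      (fun x => -(Real.exp (-(u/2)*x^2 - v*x) * q.eval x))
      hd a (a+1) (lt_add_one a) hga hpos hlim
    refine ⟨ξ, ?_, hξ1⟩
    rcases mul_eq_zero.1 (neg_eq_zero.1 hξ2) with h | h
    · exact absurd h (Real.exp_ne_zero _)
    · exact h

lemma stmt19_main (p : Polynomial ℝ) (u v : ℝ) (hu : 0 ≤ u) :
    ZC ((C u * X + C v) * p - derivative p) ≤ ZC p := by
  set q := (C u * X + C v) * p - derivative p with hqdef
  by_cases hq : q = 0
  · rw [hq, stmt19_ZC_zero]; exact Nat.zero_le _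
  have hp : p ≠ 0 := by
    intro h; apply hq; rw [hqdef, h, mul_zero, derivative_zero, sub_zero]
  have h1 := stmt19_ZC_add_ZR q hq
  have h2 := stmt19_ZC_add_ZR p hp
  obtain ⟨k1, hk1⟩ := stmt19_ZC_even q
  obtain ⟨k2, hk2⟩ := stmt19_ZC_even p
  have hmult : ∀ x, p.rootMultiplicity x ≤ q.rootMultiplicity x + 1 :=
    fun x => stmt19_mult_le p u v hq x
  have hbetween : ∀ a b : ℝ, p.IsRoot a → p.IsRoot b → a < b →
      ∃ z, q.IsRoot z ∧ a < z ∧ z < b :=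
    fun a b ha hb hab => stmt19_between_roots p u v a b ha hb hab
  have hZRp : ZR p = Multiset.card p.roots := rfl
  have hZRq : ZR q = Multiset.card q.roots := rfl
  rcases lt_or_eq_of_le hu with hu0 | hu0
  · have hdeg : q.natDegree ≤ p.natDegree + 1 := by
      rw [hqdef]
      apply le_trans (natDegree_sub_le _ _)
      simp only [max_le_iff]
      constructor
      · apply le_trans natDegree_mul_le
        have := natDegree_linear_le (a := u) (b := v)
        omega
      · have := natDegree_derivative_le p
        omega
    have hcount : Multiset.card p.roots ≤ Multiset.card q.roots := by
      by_cases hroots : p.roots = 0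
      · rw [hroots]; simp
      · have hne : p.roots.toFinset.Nonempty := by
          rw [Multiset.toFinset_nonempty]
          exact hroots
        set A := p.roots.toFinset.max' hne with hA
        have hAroot : p.IsRoot A :=
          (mem_roots hp).1 (Multiset.mem_toFinset.1 (p.roots.toFinset.max'_mem hne))
        have hAmax : ∀ b, p.IsRoot b → b ≤ A := fun b hb =>
          Finset.le_max' _ b (Multiset.mem_toFinset.2 ((mem_roots hp).2 hb))
        obtain ⟨ξ, hξ1, hξ2⟩ := stmt19_tail_root p u v hu0 A hAroot hAmax
        exact stmt19_card_le_aux' p q hq hmult hbetween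
          ⟨ξ, hξ1, fun a ha => lt_of_le_of_lt (hAmax a ha) hξ2⟩
    omega
  · have hCu : C u = 0 := by rw [← hu0, map_zero]
    have hdeg : q.natDegree ≤ p.natDegree := by
      rw [hqdef, hCu, zero_mul, zero_add]
      apply le_trans (natDegree_sub_le _ _)
      simp only [max_le_iff]
      constructor
      · exact natDegree_C_mul_le v p
      · have := natDegree_derivative_le p
        omega
    have hcount := stmt19_card_le_aux p q hq hmult hbetween
    omega

end Auxiliary

theorem stmt19 (p : Polynomial ℝ) (c d β : ℝ) (hc : 0 ≤ c) (hβ : 0 ≤ β) :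
    ZC ((C c * X + C d) * p - C β * derivative p) ≤ ZC p := by
  rcases lt_or_eq_of_le hβ with hβ0 | hβ0
  · have hβne : β ≠ 0 := ne_of_gt hβ0
    have heq : (C c * X + C d) * p - C β * derivative p
        = C β * ((C (c/β) * X + C (d/β)) * p - derivative p) := by
      have h1 : C β * C (c/β) = C c := by
        rw [← C_mul]; congr 1; field_simp
      have h2 : C β * C (d/β) = C d := by
        rw [← C_mul]; congr 1; field_simp
      rw [mul_sub]
      congr 1
      rw [← mul_assoc, mul_add, ← mul_assoc, h1, h2]
    rw [heq, stmt19_ZC_C_mul _ β hβne]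
    exact stmt19_main p (c/β) (d/β) (div_nonneg hc (le_of_lt hβ0))
  · rw [← hβ0, map_zero, zero_mul, sub_zero]
    by_cases hp : p = 0
    · rw [hp, mul_zero]
    by_cases hlin : (C c * X + C d) = 0
    · rw [hlin, zero_mul, stmt19_ZC_zero]; exact Nat.zero_le _
    · rw [stmt19_ZC_mul _ _ hlin hp, stmt19_ZC_linear]
      omega
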